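/- Let J be a B(H)-ideal that is idempotent, i.e., every element of J is a finite sum Σᵢ A_iB_i with all A_i, B_i ∈ J. Then for every S ∈ J, J(S)J = JS + SJ + J(S)J; in particular AS ∈ J(S)J and SA ∈ J(S)J for every A ∈ J. -/

import Mathlib

open scoped BigOperators
open TopologicalSpace

variable {H : Type*} [NormedAddCommGroup H] [InnerProductSpace ℂ H] [CompleteSpace H]

/-- `J` is a two-sided ideal of `B(H)`: an additive subgroup closed under left and
right multiplication by arbitrary bounded operators. -/
def IsBHIdeal (J : Set (H →L[ℂ] H)) : Prop :=
  (0 : H →L[ℂ] H) ∈ J ∧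
  (∀ x ∈ J, ∀ y ∈ J, x + y ∈ J) ∧
  (∀ x ∈ J, -x ∈ J) ∧
  ∀ (A : H →L[ℂ] H), ∀ x ∈ J, A * x ∈ J ∧ x * A ∈ J

/-- `I` is a `J`-ideal: an additive subgroup of `B(H)` contained in `J` and closed
under left and right multiplication by elements of `J`. -/
def IsSubideal (J I : Set (H →L[ℂ] H)) : Prop :=
  I ⊆ J ∧ (0 : H →L[ℂ] H) ∈ I ∧
  (∀ x ∈ I, ∀ y ∈ I, x + y ∈ I) ∧
  (∀ x ∈ I, -x ∈ I) ∧
  ∀ A ∈ J, ∀ x ∈ I, A * x ∈ I ∧ x * A ∈ I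

/-- A linear `J`-ideal: a `J`-ideal closed under multiplication by complex scalars. -/
def IsLinearSubideal (J I : Set (H →L[ℂ] H)) : Prop :=
  IsSubideal J I ∧ ∀ (c : ℂ), ∀ x ∈ I, c • x ∈ I

/-- A real linear `J`-ideal: a `J`-ideal closed under multiplication by real scalars. -/
def IsRealSubideal (J I : Set (H →L[ℂ] H)) : Prop :=
  IsSubideal J I ∧ ∀ (r : ℝ), ∀ x ∈ I, r • x ∈ I

/-- `(𝒮)`: the smallest two-sided ideal of `B(H)` containing `𝒮`. -/
def genBH (𝒮 : Set (H →L[ℂ] H)) : Set (H →L[ℂ] H) :=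
  ⋂₀ {I | IsBHIdeal I ∧ 𝒮 ⊆ I}

/-- `⟨𝒮⟩_J`: the smallest `J`-ideal containing `𝒮`. -/
def genSub (J 𝒮 : Set (H →L[ℂ] H)) : Set (H →L[ℂ] H) :=
  ⋂₀ {I | IsSubideal J I ∧ 𝒮 ⊆ I}

/-- `(𝒮)_J`: the smallest linear `J`-ideal containing `𝒮`. -/
def genLin (J 𝒮 : Set (H →L[ℂ] H)) : Set (H →L[ℂ] H) :=
  ⋂₀ {I | IsLinearSubideal J I ∧ 𝒮 ⊆ I}

/-- `(𝒮)_J^ℝ`: the smallest real linear `J`-ideal containing `𝒮`. -/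
def genReal (J 𝒮 : Set (H →L[ℂ] H)) : Set (H →L[ℂ] H) :=
  ⋂₀ {I | IsRealSubideal J I ∧ 𝒮 ⊆ I}

/-- `J(𝒮)`: all finite sums `Σ Aᵢ Xᵢ` with `Aᵢ ∈ J` and `Xᵢ ∈ (𝒮)`. -/
def JGen (J 𝒮 : Set (H →L[ℂ] H)) : Set (H →L[ℂ] H) :=
  {T | ∃ (n : ℕ) (A X : Fin n → (H →L[ℂ] H)),
    (∀ i, A i ∈ J ∧ X i ∈ genBH 𝒮) ∧ T = ∑ i, A i * X i}

/-- `J(𝒮)J`: all finite sums `Σ Aᵢ Xᵢ Bᵢ` with `Aᵢ, Bᵢ ∈ J` and `Xᵢ ∈ (𝒮)`. -/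
def JGenJ (J 𝒮 : Set (H →L[ℂ] H)) : Set (H →L[ℂ] H) :=
  {T | ∃ (n : ℕ) (A X B : Fin n → (H →L[ℂ] H)),
    (∀ i, A i ∈ J ∧ X i ∈ genBH 𝒮 ∧ B i ∈ J) ∧ T = ∑ i, A i * X i * B i}

/-- `JS + SJ + J(S)J = {AS + SB + Y : A, B ∈ J, Y ∈ J(S)J}`. -/
def JSplus (J : Set (H →L[ℂ] H)) (S : H →L[ℂ] H) : Set (H →L[ℂ] H) :=
  {T | ∃ A ∈ J, ∃ B ∈ J, ∃ Y ∈ JGenJ J {S}, T = A * S + S * B + Y}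

/-- `K(H)`: the compact operators on `H`. -/
def KH : Set (H →L[ℂ] H) := {T | IsCompactOperator ⇑T}

/-- `T` is a finite-rank operator: its range is finite-dimensional. -/
def IsFiniteRank (T : H →L[ℂ] H) : Prop :=
  FiniteDimensional ℂ (LinearMap.range (T : H →ₗ[ℂ] H))


section Stmt16Helpers

set_option linter.unusedSectionVars false

set_option maxHeartbeats 2000000 in
open ContinuousLinearMap in
lemma polar_exists (T : H →L[ℂ] H) :
    ∃ V : H →L[ℂ] H, IsSelfAdjoint (adjoint V * T) ∧ V * (adjoint V * T) = T := by
  classical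
  set R : H →L[ℂ] H := CFC.sqrt (star T * T) with hRdef
  have hTT : (0 : H →L[ℂ] H) ≤ star T * T := star_mul_self_nonneg T
  have hR0 : (0 : H →L[ℂ] H) ≤ R := CFC.sqrt_nonneg _
  have hRsa : IsSelfAdjoint R := IsSelfAdjoint.of_nonneg hR0
  have hRR : R * R = star T * T := CFC.sqrt_mul_sqrt_self _ hTT
  have hRadj : adjoint R = R := by rw [← star_eq_adjoint, hRsa.star_eq]
  have hnorm : ∀ x : H, ‖R x‖ = ‖T x‖ := by
    intro x
    have h1 : (inner ℂ (R x) (R x) : ℂ) = inner ℂ (T x) (T x) := by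
      calc (inner ℂ (R x) (R x) : ℂ) = inner ℂ (adjoint R x) (R x) := by rw [hRadj]
        _ = inner ℂ x (R (R x)) := adjoint_inner_left R (R x) x
        _ = inner ℂ x ((R * R) x) := rfl
        _ = inner ℂ x ((star T * T) x) := by rw [hRR]
        _ = inner ℂ x (adjoint T (T x)) := by rw [star_eq_adjoint]; rfl
        _ = inner ℂ (T x) (T x) := adjoint_inner_right T x (T x)
    have h2 : ((‖R x‖ : ℂ)) ^ 2 = ((‖T x‖ : ℂ)) ^ 2 := by
      rwa [inner_self_eq_norm_sq_to_K, inner_self_eq_norm_sq_to_K] at h1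
    have h3 : (‖R x‖ : ℝ) ^ 2 = (‖T x‖ : ℝ) ^ 2 := by exact_mod_cast h2
    nlinarith [norm_nonneg (R x), norm_nonneg (T x)]
  -- factor through the range of R
  have hker : ∀ x : H, R x = 0 → T x = 0 := by
    intro x hx
    have : ‖T x‖ = 0 := by rw [← hnorm x, hx, norm_zero]
    simpa using this
  set R' : H →ₗ[ℂ] H := (R : H →ₗ[ℂ] H) with hR'
  set T' : H →ₗ[ℂ] H := (T : H →ₗ[ℂ] H) with hT'
  have hle : LinearMap.ker R' ≤ LinearMap.ker T' := by
    intro x hx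
    rw [LinearMap.mem_ker] at hx ⊢
    exact hker x hx
  set q : (H ⧸ LinearMap.ker R') →ₗ[ℂ] H := (LinearMap.ker R').liftQ T' hle with hq
  set e : (H ⧸ LinearMap.ker R') ≃ₗ[ℂ] LinearMap.range R' := R'.quotKerEquivRange with he
  set g : LinearMap.range R' →ₗ[ℂ] H := q ∘ₗ (e.symm : LinearMap.range R' →ₗ[ℂ] H ⧸ LinearMap.ker R') with hg
  have hgR : ∀ x : H, g ⟨R x, LinearMap.mem_range_self R' x⟩ = T x := by
    intro x
    have h1 : e (Submodule.Quotient.mk x) = ⟨R x, LinearMap.mem_range_self R' x⟩ := by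
      apply Subtype.ext
      exact R'.quotKerEquivRange_apply_mk x
    have h2 : e.symm ⟨R x, LinearMap.mem_range_self R' x⟩ = Submodule.Quotient.mk x := by
      rw [← h1, LinearEquiv.symm_apply_apply]
    show q (e.symm ⟨R x, LinearMap.mem_range_self R' x⟩) = T x
    rw [h2]
    exact Submodule.liftQ_apply _ T' x
  have hgiso : ∀ y : LinearMap.range R', ‖g y‖ = ‖y‖ := by
    rintro ⟨-, x, rfl⟩
    have : g ⟨R' x, LinearMap.mem_range_self R' x⟩ = T x := hgR x
    rw [this]
    show ‖T x‖ = ‖R x‖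
    exact (hnorm x).symm
  set gi : LinearMap.range R' →ₗᵢ[ℂ] H := ⟨g, hgiso⟩ with hgi
  set gc : LinearMap.range R' →L[ℂ] H := gi.toContinuousLinearMap with hgc
  set K : Submodule ℂ H := (LinearMap.range R').topologicalClosure with hK
  set ι : LinearMap.range R' →ₗᵢ[ℂ] K :=
    ⟨Submodule.inclusion (Submodule.le_topologicalClosure _), fun x => rfl⟩ with hι
  set e₀ : LinearMap.range R' →L[ℂ] K := ι.toContinuousLinearMap with he₀
  have h_ui : IsUniformInducing e₀ := ι.isometry.isUniformInducing
  have h_dense : DenseRange e₀ := by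
    intro z
    have hz : (z : H) ∈ closure ((LinearMap.range R' : Submodule ℂ H) : Set H) := by
      rw [← Submodule.topologicalClosure_coe]
      exact z.2
    rcases mem_closure_iff_seq_limit.1 hz with ⟨u, hu, hulim⟩
    have htend : Filter.Tendsto (fun n => e₀ ⟨u n, hu n⟩) Filter.atTop (nhds z) := by
      rw [tendsto_subtype_rng]
      exact hulim
    exact mem_closure_of_tendsto htend (by filter_upwards with n using Set.mem_range_self _)
  haveI : CompleteSpace K := Submodule.topologicalClosure.completeSpace _
  set V₁ : K →L[ℂ] H := gc.extend e₀ with hV₁def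
  have hV₁e : ∀ y : LinearMap.range R', V₁ (e₀ y) = gc y := fun y =>
    ContinuousLinearMap.extend_eq gc h_dense h_ui y
  set V : H →L[ℂ] H := V₁.comp (K.orthogonalProjectionOnto) with hVdef
  have hmemK : ∀ x : H, R x ∈ K := fun x =>
    Submodule.le_topologicalClosure _ (LinearMap.mem_range_self R' x)
  have hproj : ∀ x : H, K.orthogonalProjectionOnto (R x) = ⟨R x, hmemK x⟩ := by
    intro x
    exact Submodule.orthogonalProjection_mem_subspace_eq_self (⟨R x, hmemK x⟩ : K)
  have hVR : ∀ x : H, V (R x) = T x := by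
    intro x
    show V₁ (K.orthogonalProjectionOnto (R x)) = T x
    rw [hproj x]
    have : (⟨R x, hmemK x⟩ : K) = e₀ ⟨R x, LinearMap.mem_range_self R' x⟩ := rfl
    rw [this, hV₁e]
    exact hgR x
  have hV₁norm : ∀ z : K, ‖V₁ z‖ = ‖z‖ := by
    have hcl : IsClosed {z : K | ‖V₁ z‖ = ‖z‖} :=
      isClosed_eq (V₁.continuous.norm) continuous_norm
    intro z
    refine h_dense.induction_on z hcl ?_
    intro y
    show ‖V₁ (e₀ y)‖ = ‖e₀ y‖
    rw [hV₁e]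
    have h1 : ‖gc y‖ = ‖y‖ := gi.norm_map y
    have h2 : ‖e₀ y‖ = ‖y‖ := ι.norm_map y
    rw [h1, h2]
  set Viso : K →ₗᵢ[ℂ] H := ⟨V₁.toLinearMap, hV₁norm⟩ with hViso
  have hinner : ∀ z w : K, (inner ℂ (V₁ z) (V₁ w) : ℂ) = inner ℂ (z : H) (w : H) := by
    intro z w
    have := Viso.inner_map_map z w
    rwa [Submodule.coe_inner] at this
  have hadj : ContinuousLinearMap.adjoint V * T = R := by
    ext x
    refine ext_inner_right ℂ fun v => ?_
    show (inner ℂ ((ContinuousLinearMap.adjoint V) (T x)) v : ℂ) = inner ℂ (R x) v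
    rw [adjoint_inner_left]
    have h1 : T x = V₁ ⟨R x, hmemK x⟩ := by
      rw [← hVR x]
      show V₁ (K.orthogonalProjectionOnto (R x)) = V₁ ⟨R x, hmemK x⟩
      rw [hproj x]
    have h2 : V v = V₁ (K.orthogonalProjectionOnto v) := rfl
    rw [h1, h2, hinner]
    have h3 : v - (K.orthogonalProjectionOnto v : H) ∈ Kᗮ :=
      Submodule.sub_starProjection_mem_orthogonal (K := K) v
    have h4 : (inner ℂ (R x) (v - (K.orthogonalProjectionOnto v : H)) : ℂ) = 0 :=
      (Submodule.mem_orthogonal K _).1 h3 (R x) (hmemK x)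
    have h5 : (inner ℂ (R x) v : ℂ) - inner ℂ (R x) ((K.orthogonalProjectionOnto v : H)) = 0 := by
      rw [← inner_sub_right]
      exact h4
    have := sub_eq_zero.1 h5
    exact this.symm
  refine ⟨V, ?_, ?_⟩
  · rw [hadj]
    exact hRsa
  · rw [hadj]
    ext x
    exact hVR x

open ContinuousLinearMap in
lemma IsBHIdeal.star_mem {I : Set (H →L[ℂ] H)} (hI : IsBHIdeal I) {T : H →L[ℂ] H}
    (hT : T ∈ I) : star T ∈ I := by
  obtain ⟨V, hsa, hfac⟩ := polar_exists T
  have key : star T = (adjoint V * T) * star V := by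
    conv_lhs => rw [← hfac]
    rw [star_mul, hsa.star_eq]
  rw [key]
  have h1 : adjoint V * T ∈ I := (hI.2.2.2 (adjoint V) T hT).1
  exact (hI.2.2.2 (star V) _ h1).2

lemma mem_genBH_self (S : H →L[ℂ] H) : S ∈ genBH {S} := by
  intro I hI
  exact hI.2 rfl

lemma star_mem_genBH (S : H →L[ℂ] H) : star S ∈ genBH {S} := by
  intro I hI
  exact hI.1.star_mem (hI.2 rfl)

lemma JGenJ_zero (J 𝒮 : Set (H →L[ℂ] H)) : (0 : H →L[ℂ] H) ∈ JGenJ J 𝒮 :=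
  ⟨0, Fin.elim0, Fin.elim0, Fin.elim0, fun i => i.elim0, by simp⟩

lemma JGenJ_add {J 𝒮 : Set (H →L[ℂ] H)} {T₁ T₂ : H →L[ℂ] H}
    (h1 : T₁ ∈ JGenJ J 𝒮) (h2 : T₂ ∈ JGenJ J 𝒮) : T₁ + T₂ ∈ JGenJ J 𝒮 := by
  obtain ⟨n, A, X, B, hmem, rfl⟩ := h1
  obtain ⟨m, A', X', B', hmem', rfl⟩ := h2
  refine ⟨n + m, Fin.append A A', Fin.append X X', Fin.append B B', ?_, ?_⟩
  · intro i
    refine Fin.addCases (fun j => ?_) (fun j => ?_) i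
    · simpa [Fin.append_left] using hmem j
    · simpa [Fin.append_right] using hmem' j
  · rw [Fin.sum_univ_add]
    simp [Fin.append_left, Fin.append_right]

lemma JGenJ_sum {J 𝒮 : Set (H →L[ℂ] H)} {n : ℕ} {f : Fin n → (H →L[ℂ] H)}
    (h : ∀ i, f i ∈ JGenJ J 𝒮) : (∑ i, f i) ∈ JGenJ J 𝒮 := by
  classical
  refine Finset.sum_induction f (· ∈ JGenJ J 𝒮) (fun a b ha hb => JGenJ_add ha hb)
    (JGenJ_zero J 𝒮) (fun i _ => h i)

open ContinuousLinearMap in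
lemma mul_mul_S_mem {J : Set (H →L[ℂ] H)} (hJ : IsBHIdeal J) {C D S : H →L[ℂ] H}
    (hC : C ∈ J) (hD : D ∈ J) : C * D * S ∈ JGenJ J {S} := by
  obtain ⟨V, hsa, hfac⟩ := polar_exists (D * S)
  have hP : adjoint V * (D * S) = star S * star D * V := by
    conv_lhs => rw [← hsa.star_eq]
    rw [star_mul, star_mul, ← star_eq_adjoint, star_star]
  have key : C * D * S = (C * V) * star S * (star D * V) := by
    calc C * D * S = C * (D * S) := mul_assoc _ _ _
      _ = C * (V * (adjoint V * (D * S))) := by rw [hfac]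
      _ = C * (V * (star S * star D * V)) := by rw [hP]
      _ = (C * V) * star S * (star D * V) := by simp only [mul_assoc]
  refine ⟨1, ![C * V], ![star S], ![star D * V], ?_, ?_⟩
  · intro i
    simp only [Matrix.cons_val_fin_one]
    refine ⟨(hJ.2.2.2 V C hC).2, star_mem_genBH S, ?_⟩
    exact (hJ.2.2.2 V (star D) (hJ.star_mem hD)).2
  · simpa using key

open ContinuousLinearMap in
lemma S_mul_mul_mem {J : Set (H →L[ℂ] H)} (hJ : IsBHIdeal J) {C D S : H →L[ℂ] H}
    (hC : C ∈ J) (hD : D ∈ J) : S * (C * D) ∈ JGenJ J {S} := by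
  obtain ⟨V, hsa, hfac⟩ := polar_exists (star (S * C))
  have hT : S * C = (adjoint V * (star C * star S)) * star V := by
    conv_lhs => rw [← star_star (S * C)]
    conv_lhs => rw [← hfac]
    rw [star_mul, hsa.star_eq, star_mul]
  have key : S * (C * D) = (adjoint V * star C) * star S * (star V * D) := by
    calc S * (C * D) = (S * C) * D := (mul_assoc _ _ _).symm
      _ = ((adjoint V * (star C * star S)) * star V) * D := by rw [hT]
      _ = (adjoint V * star C) * star S * (star V * D) := by simp only [mul_assoc]
  refine ⟨1, ![adjoint V * star C], ![star S], ![star V * D], ?_, ?_⟩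
  · intro i
    simp only [Matrix.cons_val_fin_one]
    refine ⟨(hJ.2.2.2 (adjoint V) (star C) (hJ.star_mem hC)).1, star_mem_genBH S, ?_⟩
    exact (hJ.2.2.2 (star V) D hD).1
  · simpa using key

end Stmt16Helpers

/-- if `J` is idempotent then `J(S)J = JS + SJ + J(S)J` for every
`S ∈ J`; in particular `AS, SA ∈ J(S)J` for every `A ∈ J`. -/
theorem stmt_16 (J : Set (H →L[ℂ] H)) (hJ : IsBHIdeal J)
    (hid : ∀ x ∈ J, ∃ (n : ℕ) (A B : Fin n → (H →L[ℂ] H)),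
      (∀ i, A i ∈ J ∧ B i ∈ J) ∧ x = ∑ i, A i * B i)
    (S : H →L[ℂ] H) (hS : S ∈ J) :
    JGenJ J {S} = JSplus J S ∧
    ∀ A ∈ J, A * S ∈ JGenJ J {S} ∧ S * A ∈ JGenJ J {S} := by
  have hAS : ∀ A ∈ J, A * S ∈ JGenJ J {S} := by
    intro A hA
    obtain ⟨n, C, D, hCD, rfl⟩ := hid A hA
    rw [Finset.sum_mul]
    exact JGenJ_sum fun i => mul_mul_S_mem hJ (hCD i).1 (hCD i).2
  have hSA : ∀ A ∈ J, S * A ∈ JGenJ J {S} := by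
    intro A hA
    obtain ⟨n, C, D, hCD, rfl⟩ := hid A hA
    rw [Finset.mul_sum]
    exact JGenJ_sum fun i => S_mul_mul_mem hJ (hCD i).1 (hCD i).2
  refine ⟨?_, fun A hA => ⟨hAS A hA, hSA A hA⟩⟩
  apply Set.Subset.antisymm
  · intro T hT
    exact ⟨0, hJ.1, 0, hJ.1, T, hT, by simp⟩
  · rintro T ⟨A, hA, B, hB, Y, hY, rfl⟩
    exact JGenJ_add (JGenJ_add (hAS A hA) (hSA B hB)) hY
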